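/- arXiv:1104.4160 — 4 statements merged into one kernel-verified Lean document; each statement's English description precedes it below -/
import Mathlib

section
/- Let G be a finite simple graph, let M0 be a maximal matching in G of size m, let V(M0) denote the set of endpoints of edges of M0, and let V* = V(G) \ V(M0). Let k be a natural number and let v ∈ V(M0) be a vertex with m + |N(v) ∩ V*| > 2k, where N(v) is the neighborhood of v. Then every edge dominating set M of G with |M| ≤ k satisfies v ∈ V(M), i.e. v is an endpoint of some edge of M. -/
/-- Let `M0` be a maximal matching of size `m` in a finite simple graph `G`, let
`V* = V \ V(M0)`, and let `v ∈ V(M0)` be a vertex with `m + |N(v) ∩ V*| > 2k`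
(an "overloaded" vertex).  Then every edge dominating set `M` of `G` with
`|M| ≤ k` contains `v` among the endpoints of its edges. -/
theorem overloaded_vertex_in_eds {V : Type*} [Fintype V] [DecidableEq V]
    (G : SimpleGraph V) [DecidableRel G.Adj] (M0 : Finset (Sym2 V)) (m k : ℕ)
    (hM0E : ↑M0 ⊆ G.edgeSet)
    (hM0match : (M0 : Set (Sym2 V)).Pairwise fun e f => ∀ x, x ∈ e → x ∉ f)
    (hM0max : ∀ e ∈ G.edgeSet, e ∉ M0 →
      ¬ ((insert e M0 : Finset (Sym2 V)) : Set (Sym2 V)).Pairwise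
          fun e f => ∀ x, x ∈ e → x ∉ f)
    (hm : M0.card = m)
    (v : V) (hv : ∃ e ∈ M0, v ∈ e)
    (hover : 2 * k < m + ((G.neighborFinset v).filter fun u => ∀ e ∈ M0, u ∉ e).card)
    (M : Finset (Sym2 V))
    (hME : ↑M ⊆ G.edgeSet)
    (hMdom : ∀ e ∈ G.edgeSet, ∃ f ∈ M, ∃ x, x ∈ e ∧ x ∈ f)
    (hMcard : M.card ≤ k) :
    ∃ e ∈ M, v ∈ e := by
  classical
  by_contra hcon
  push_neg at hcon
  set S : Finset V := (G.neighborFinset v).filter (fun u => ∀ e ∈ M0, u ∉ e) with hS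
  let toF : Sym2 V → Finset V :=
    Sym2.lift ⟨fun x y => {x, y}, fun x y => Finset.pair_comm x y⟩
  set W : Finset V := M.biUnion toF with hWdef
  have hmemW : ∀ x : V, x ∈ W ↔ ∃ f ∈ M, x ∈ f := by
    intro x
    simp only [hWdef, Finset.mem_biUnion, toF]
    constructor
    · rintro ⟨f, hf, hx⟩
      refine ⟨f, hf, ?_⟩
      induction f using Sym2.ind with
      | _ a b => simpa [Sym2.mem_iff] using hx
    · rintro ⟨f, hf, hx⟩
      refine ⟨f, hf, ?_⟩
      induction f using Sym2.ind with
      | _ a b => simpa [Sym2.mem_iff] using hx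
  have hWcard : W.card ≤ 2 * k := by
    have h1 : W.card ≤ ∑ e ∈ M, (toF e).card :=
      Finset.card_biUnion_le
    have h2 : ∀ e ∈ M, (toF e).card ≤ 2 := by
      intro e _
      induction e using Sym2.ind with
      | _ a b =>
        simp only [toF, Sym2.lift_mk]
        exact (Finset.card_insert_le _ _).trans (by simp)
    calc W.card ≤ ∑ e ∈ M, (toF e).card := h1
      _ ≤ ∑ _e ∈ M, 2 := Finset.sum_le_sum h2
      _ = 2 * M.card := by rw [Finset.sum_const, smul_eq_mul, mul_comm]
      _ ≤ 2 * k := by omega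
  have hdomW : ∀ e ∈ M0, ∃ x, x ∈ e ∧ x ∈ W := by
    intro e he
    obtain ⟨f, hf, x, hxe, hxf⟩ := hMdom e (hM0E he)
    exact ⟨x, hxe, (hmemW x).2 ⟨f, hf, hxf⟩⟩
  let g : Sym2 V → V := fun e => if h : ∃ x, x ∈ e ∧ x ∈ W then h.choose else v
  have hg : ∀ e ∈ M0, g e ∈ e ∧ g e ∈ W := by
    intro e he
    have h := hdomW e he
    simp only [g, dif_pos h]
    exact h.choose_spec
  -- each u ∈ S is in W
  have hSW : ∀ u ∈ S, u ∈ W := by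
    intro u hu
    rw [hS, Finset.mem_filter, SimpleGraph.mem_neighborFinset] at hu
    have hedge : s(v, u) ∈ G.edgeSet := hu.1
    obtain ⟨f, hf, x, hxe, hxf⟩ := hMdom _ hedge
    rw [Sym2.mem_iff] at hxe
    rcases hxe with rfl | rfl
    · exact absurd hxf (hcon f hf)
    · exact (hmemW x).2 ⟨f, hf, hxf⟩
  have himg : (M0.image g).card = m := by
    rw [Finset.card_image_of_injOn, hm]
    intro e he f hf hef
    by_contra hne
    exact hM0match (Finset.mem_coe.2 he) (Finset.mem_coe.2 hf) hne (g e)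
      (hg e he).1 (hef ▸ (hg f hf).1)
  have hdisj : Disjoint (M0.image g) S := by
    rw [Finset.disjoint_left]
    intro x hx hxS
    obtain ⟨e, he, rfl⟩ := Finset.mem_image.1 hx
    rw [hS, Finset.mem_filter] at hxS
    exact hxS.2 e he (hg e he).1
  have hsub : M0.image g ∪ S ⊆ W := by
    intro x hx
    rcases Finset.mem_union.1 hx with hx | hx
    · obtain ⟨e, he, rfl⟩ := Finset.mem_image.1 hx
      exact (hg e he).2
    · exact hSW x hx
  have hcard : (M0.image g ∪ S).card = m + S.card := by
    rw [Finset.card_union_of_disjoint hdisj, himg]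
  have := Finset.card_le_card hsub
  omega
end

section
/- Let G be a finite simple graph, let M0 be a matching in G, and let M be an edge dominating set of G. Then |M0| ≤ 2·|M|. -/
open Classical in
/-- If `M0` is a matching in a finite simple graph `G` and `M` is an edge
dominating set of `G`, then `|M0| ≤ 2 * |M|`. -/
theorem matching_card_le_two_mul_eds {V : Type*} [Fintype V]
    (G : SimpleGraph V) (M0 M : Finset (Sym2 V))
    (hM0E : ↑M0 ⊆ G.edgeSet)
    (hM0match : (M0 : Set (Sym2 V)).Pairwise fun e f => ∀ x, x ∈ e → x ∉ f)
    (hME : ↑M ⊆ G.edgeSet)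
    (hMdom : ∀ e ∈ G.edgeSet, ∃ f ∈ M, ∃ x, x ∈ e ∧ x ∈ f) :
    M0.card ≤ 2 * M.card := by
  classical
  -- vertex set of a Sym2
  set vs : Sym2 V → Finset V :=
    fun e => Sym2.lift ⟨fun a b => ({a, b} : Finset V),
      fun a b => Finset.pair_comm a b⟩ e with hvs
  have hmem : ∀ (e : Sym2 V) (x : V), x ∈ e ↔ x ∈ vs e := by
    intro e x
    induction e using Sym2.ind with
    | _ a b => simp [hvs, Sym2.mem_iff]
  have hcard : ∀ e : Sym2 V, (vs e).card ≤ 2 := by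
    intro e
    induction e using Sym2.ind with
    | _ a b => simpa [hvs] using Finset.card_insert_le a {b}
  set S : Finset V := M.biUnion vs with hS
  have hScard : S.card ≤ 2 * M.card := by
    calc S.card ≤ ∑ f ∈ M, (vs f).card := Finset.card_biUnion_le
    _ ≤ ∑ _f ∈ M, 2 := Finset.sum_le_sum fun f _ => hcard f
    _ = 2 * M.card := by rw [Finset.sum_const, smul_eq_mul, mul_comm]
  -- choice of dominated vertex
  have hchoice : ∀ e ∈ M0, ∃ x, x ∈ e ∧ x ∈ S := by
    intro e he
    obtain ⟨f, hf, x, hxe, hxf⟩ := hMdom e (hM0E he)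
    exact ⟨x, hxe, Finset.mem_biUnion.mpr ⟨f, hf, (hmem f x).mp hxf⟩⟩
  choose g hg1 hg2 using hchoice
  have : M0.card ≤ S.card := by
    rcases M0.eq_empty_or_nonempty with h0 | ⟨e0, he0⟩
    · simp [h0]
    haveI : Nonempty V := ⟨g e0 he0⟩
    apply Finset.card_le_card_of_injOn (fun e => if h : e ∈ M0 then g e h else Classical.arbitrary _)
    · intro e he; rw [Finset.mem_coe] at he; simp only [he, dif_pos]; exact hg2 e he
    · intro e he f hf hef
      simp only [Finset.mem_coe] at he hf
      simp only [dif_pos he, dif_pos hf] at hef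
      by_contra hne
      exact hM0match he hf hne (g e he) (hg1 e he) (hef ▸ hg1 f hf)
  omega
end

section
/- Let G be a finite simple graph and let C be a minimal vertex cover of G (C is a vertex cover and no proper subset of C is a vertex cover). Then G has an edge dominating set M such that C ⊆ V(M) and |M| ≤ |C| − ν(G[C]), where ν(G[C]) is the maximum size of a matching in the subgraph of G induced by C. -/
/-- `N` is a matching in the simple graph `G`: a set of edges of `G` that are
pairwise vertex-disjoint. -/
def IsMatchingIn {W : Type*} (G : SimpleGraph W) (N : Finset (Sym2 W)) : Prop :=
  ↑N ⊆ G.edgeSet ∧ (N : Set (Sym2 W)).Pairwise fun e f => ∀ x, x ∈ e → x ∉ f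

/-- The matching number of a simple graph: the maximum size of a matching. -/
noncomputable def matchingNumber {W : Type*} (G : SimpleGraph W) : ℕ :=
  sSup {n | ∃ N : Finset (Sym2 W), IsMatchingIn G N ∧ N.card = n}

/-- If `C` is a minimal vertex cover of a finite simple graph `G`, then `G` has an
edge dominating set `M` with `C ⊆ V(M)` and `|M| ≤ |C| - ν(G[C])`, where `ν(G[C])`
is the matching number of the subgraph of `G` induced by `C`. -/
theorem minimal_vertex_cover_eds {V : Type*} [Fintype V] [DecidableEq V]
    (G : SimpleGraph V) (C : Finset V)
    (hcover : ∀ u w : V, G.Adj u w → u ∈ C ∨ w ∈ C)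
    (hmin : ∀ D : Finset V, D ⊂ C → ¬ ∀ u w : V, G.Adj u w → u ∈ D ∨ w ∈ D) :
    ∃ M : Finset (Sym2 V),
      ↑M ⊆ G.edgeSet ∧
      (∀ e ∈ G.edgeSet, ∃ f ∈ M, ∃ x, x ∈ e ∧ x ∈ f) ∧
      (∀ v ∈ C, ∃ e ∈ M, v ∈ e) ∧
      M.card ≤ C.card - matchingNumber (G.induce (↑C : Set V)) := by
  classical
  set H := G.induce (↑C : Set V) with hH
  -- obtain a maximum matching of H
  have hmem : matchingNumber H ∈
      {n | ∃ N : Finset (Sym2 (↑C : Set V)), IsMatchingIn H N ∧ N.card = n} := by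
    apply Nat.sSup_mem
    · exact ⟨0, ∅, ⟨by simp, by simp⟩, rfl⟩
    · exact ⟨Fintype.card (Sym2 (↑C : Set V)), fun n hn => by
        obtain ⟨N, _, rfl⟩ := hn; exact N.card_le_univ⟩
  obtain ⟨N, ⟨hNedge, hNpair⟩, hNcard⟩ := hmem
  set N' : Finset (Sym2 V) := N.image (Sym2.map Subtype.val) with hN'
  have hN'card : N'.card = N.card :=
    Finset.card_image_of_injective _ (Sym2.map.injective Subtype.val_injective)
  have hN'edge : ∀ e ∈ N', e ∈ G.edgeSet := by
    intro e he
    simp only [hN', Finset.mem_image] at he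
    obtain ⟨e0, he0, rfl⟩ := he
    have h1 : e0 ∈ H.edgeSet := hNedge (Finset.mem_coe.mpr he0)
    revert h1
    induction e0 using Sym2.ind with
    | _ a b =>
      intro h1
      simp only [SimpleGraph.mem_edgeSet] at h1
      exact h1
  have hmemC : ∀ e ∈ N', ∀ x : V, x ∈ e → x ∈ C := by
    intro e he x hx
    simp only [hN', Finset.mem_image] at he
    obtain ⟨e0, he0, rfl⟩ := he
    obtain ⟨y, _, rfl⟩ := Sym2.mem_map.mp hx
    exact y.2
  set endF : Sym2 V → Finset V := fun e => Finset.univ.filter (· ∈ e) with hendF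
  have hend2 : ∀ e ∈ N', (endF e).card = 2 := by
    intro e he
    have hnd : ¬ e.IsDiag := G.not_isDiag_of_mem_edgeSet (hN'edge e he)
    revert hnd
    induction e using Sym2.ind with
    | _ a b =>
      intro hnd
      have hab : a ≠ b := by simpa using hnd
      have : endF s(a, b) = {a, b} := by
        ext x
        simp [hendF, Sym2.mem_iff]
      rw [this, Finset.card_pair hab]
  set T : Finset V := C.filter (fun v => ∃ e ∈ N', v ∈ e) with hT
  set S : Finset V := C.filter (fun v => ¬ ∃ e ∈ N', v ∈ e) with hS
  have hTeq : T = N'.biUnion endF := by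
    ext x
    simp only [hT, Finset.mem_filter, Finset.mem_biUnion, hendF, Finset.mem_univ,
      true_and]
    constructor
    · rintro ⟨_, e, he, hxe⟩; exact ⟨e, he, hxe⟩
    · rintro ⟨e, he, hxe⟩; exact ⟨hmemC e he x hxe, e, he, hxe⟩
  have hdisj : ∀ e ∈ N', ∀ f ∈ N', e ≠ f → Disjoint (endF e) (endF f) := by
    intro e he f hf hef
    rw [Finset.disjoint_left]
    intro x hxe hxf
    simp only [hendF, Finset.mem_filter, Finset.mem_univ, true_and] at hxe hxf
    simp only [hN', Finset.mem_image] at he hf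
    obtain ⟨e0, he0, rfl⟩ := he
    obtain ⟨f0, hf0, rfl⟩ := hf
    have he0f0 : e0 ≠ f0 := fun h => hef (by rw [h])
    obtain ⟨y, hy, hyx⟩ := Sym2.mem_map.mp hxe
    obtain ⟨z, hz, hzx⟩ := Sym2.mem_map.mp hxf
    have hyz : y = z := Subtype.ext (hyx.trans hzx.symm)
    exact hNpair (Finset.mem_coe.mpr he0) (Finset.mem_coe.mpr hf0) he0f0 y hy
      (hyz ▸ hz)
  have hTcard : T.card = 2 * N'.card := by
    rw [hTeq, Finset.card_biUnion hdisj, Finset.sum_congr rfl hend2]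
    simp [mul_comm]
  have hTS : T.card + S.card = C.card := Finset.card_filter_add_card_filter_not _
  have hSedge : ∀ v ∈ S, ∃ w, G.Adj v w ∧ w ∉ C := by
    intro v hv
    have hvC : v ∈ C := (Finset.mem_filter.mp hv).1
    have := hmin (C.erase v) (Finset.erase_ssubset hvC)
    push_neg at this
    obtain ⟨u, w, hadj, hu, hw⟩ := this
    rcases hcover u w hadj with huC | hwC
    · have : u = v := by
        by_contra h
        exact hu (Finset.mem_erase.mpr ⟨h, huC⟩)
      subst this
      refine ⟨w, hadj, fun hwC' => ?_⟩
      exact hw (Finset.mem_erase.mpr ⟨fun h => hadj.ne h.symm, hwC'⟩)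
    · have : w = v := by
        by_contra h
        exact hw (Finset.mem_erase.mpr ⟨h, hwC⟩)
      subst this
      refine ⟨u, hadj.symm, fun huC' => ?_⟩
      exact hu (Finset.mem_erase.mpr ⟨fun h => hadj.ne h, huC'⟩)
  have hch : ∀ v : V, ∃ w, v ∈ S → (G.Adj v w ∧ w ∉ C) := by
    intro v
    by_cases h : v ∈ S
    · obtain ⟨w, hw⟩ := hSedge v h
      exact ⟨w, fun _ => hw⟩
    · exact ⟨v, fun h' => absurd h' h⟩
  choose fc hfc using hch
  set M2 : Finset (Sym2 V) := S.image (fun v => s(v, fc v)) with hM2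
  refine ⟨N' ∪ M2, ?_, ?_, ?_, ?_⟩
  · intro e he
    rcases Finset.mem_union.mp he with h | h
    · exact hN'edge e h
    · simp only [hM2, Finset.mem_image] at h
      obtain ⟨v, hv, rfl⟩ := h
      exact (hfc v hv).1
  · -- dominating; first prove cover property
    intro e
    induction e using Sym2.ind with
    | _ u w =>
      intro he
      have hadj : G.Adj u w := he
      have key : ∀ x : V, x ∈ C → x ∈ s(u, w) →
          ∃ f ∈ N' ∪ M2, ∃ y, y ∈ s(u, w) ∧ y ∈ f := by
        intro x hxC hxe
        by_cases h : ∃ f ∈ N', x ∈ f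
        · obtain ⟨f, hf, hxf⟩ := h
          exact ⟨f, Finset.mem_union_left _ hf, x, hxe, hxf⟩
        · have hxS : x ∈ S := Finset.mem_filter.mpr ⟨hxC, h⟩
          exact ⟨s(x, fc x), Finset.mem_union_right _
            (Finset.mem_image.mpr ⟨x, hxS, rfl⟩), x, hxe, by simp⟩
      rcases hcover u w hadj with h | h
      · exact key u h (by simp)
      · exact key w h (by simp)
  · intro v hv
    by_cases h : ∃ f ∈ N', v ∈ f
    · obtain ⟨f, hf, hvf⟩ := h
      exact ⟨f, Finset.mem_union_left _ hf, hvf⟩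
    · have hvS : v ∈ S := Finset.mem_filter.mpr ⟨hv, h⟩
      exact ⟨s(v, fc v), Finset.mem_union_right _
        (Finset.mem_image.mpr ⟨v, hvS, rfl⟩), by simp⟩
  · have h1 : (N' ∪ M2).card ≤ N'.card + M2.card := Finset.card_union_le _ _
    have h2 : M2.card ≤ S.card := Finset.card_image_le
    rw [← hNcard, ← hN'card]
    omega
end

section
/- Let G be a finite simple graph and let u be a vertex of G such that every neighbor of u has at least one neighbor different from u. If G has an edge dominating set of size k, then the induced subgraph G − u (on the vertex set V(G) \ {u}) has an edge dominating set of size at most k. -/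
/-- `M` is an edge dominating set of the simple graph `G`: a set of edges of `G`
such that every edge of `G` shares an endpoint with some edge of `M`. -/
def IsEdgeDomSet {W : Type*} (G : SimpleGraph W) (M : Finset (Sym2 W)) : Prop :=
  ↑M ⊆ G.edgeSet ∧ ∀ e ∈ G.edgeSet, ∃ f ∈ M, ∃ x, x ∈ e ∧ x ∈ f

lemma attachWith_mem_induce_edgeSet {V : Type*} (G : SimpleGraph V) (s : Set V)
    (e : Sym2 V) (he : e ∈ G.edgeSet) (h : ∀ a ∈ e, a ∈ s) :
    e.attachWith h ∈ (G.induce s).edgeSet := by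
  induction' e with a b
  simpa [Sym2.attachWith, Sym2.pmap_pair] using he

/-- Let `u` be a vertex of a finite simple graph `G` such that every neighbor of
`u` has a neighbor different from `u`.  If `G` has an edge dominating set of size
`k`, then the induced subgraph `G - u` has an edge dominating set of size at most
`k`. -/
theorem delete_vertex_eds {V : Type*} [Fintype V] [DecidableEq V]
    (G : SimpleGraph V) (u : V)
    (hu : ∀ w : V, G.Adj u w → ∃ x : V, G.Adj w x ∧ x ≠ u)
    (k : ℕ)
    (hG : ∃ M : Finset (Sym2 V), IsEdgeDomSet G M ∧ M.card = k) :
    ∃ M' : Finset (Sym2 ({u}ᶜ : Set V)),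
      IsEdgeDomSet (G.induce ({u}ᶜ : Set V)) M' ∧ M'.card ≤ k := by
  classical
  obtain ⟨M, ⟨hMsub, hMdom⟩, hMcard⟩ := hG
  -- For each edge of `M`, find a replacement edge avoiding `u` but keeping
  -- every endpoint other than `u`.
  have hrep : ∀ e ∈ M, ∃ f : Sym2 V,
      f ∈ G.edgeSet ∧ u ∉ f ∧ ∀ x ∈ e, x ≠ u → x ∈ f := by
    intro e he
    have heE : e ∈ G.edgeSet := hMsub he
    by_cases h : u ∈ e
    · have hspec := Sym2.other_spec h
      set w := Sym2.Mem.other h with hw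
      have hadj : G.Adj u w := by
        rw [← hspec] at heE
        exact heE
      obtain ⟨x, hwx, hxu⟩ := hu w hadj
      refine ⟨s(w, x), hwx, ?_, ?_⟩
      · rw [Sym2.mem_iff]
        push_neg
        exact ⟨hadj.ne, fun h' => hxu h'.symm⟩
      · intro y hy hyu
        rw [← hspec, Sym2.mem_iff] at hy
        rcases hy with rfl | rfl
        · exact absurd rfl hyu
        · simp
    · exact ⟨e, heE, h, fun x hx _ => hx⟩
  choose rep hrepE hrepu hrepmem using hrep
  have hcompl : ∀ (e : Sym2 V) (he : e ∈ M), ∀ a ∈ rep e he, a ∈ ({u}ᶜ : Set V) := by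
    intro e he a ha
    simp only [Set.mem_compl_iff, Set.mem_singleton_iff]
    rintro rfl
    exact hrepu e he ha
  set M' : Finset (Sym2 ({u}ᶜ : Set V)) :=
    M.attach.image (fun e => (rep e.1 e.2).attachWith (hcompl e.1 e.2)) with hM'
  refine ⟨M', ⟨?_, ?_⟩, ?_⟩
  · -- subset of edge set
    intro f' hf'
    simp only [hM', Finset.coe_image, Set.mem_image, Finset.mem_coe,
      Finset.mem_attach, true_and] at hf'
    obtain ⟨⟨e, he⟩, -, rfl⟩ := hf'
    exact attachWith_mem_induce_edgeSet G _ _ (hrepE e he) _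
  · -- domination
    intro e' he'
    induction' e' with a b
    have hab : G.Adj a b := he'
    have : s(a.1, b.1) ∈ G.edgeSet := hab
    obtain ⟨f, hf, x, hxe, hxf⟩ := hMdom _ this
    have hxu : x ≠ u := by
      rw [Sym2.mem_iff] at hxe
      rcases hxe with rfl | rfl
      · exact a.2
      · exact b.2
    have hxrep : x ∈ rep f hf := hrepmem f hf x hxf hxu
    refine ⟨(rep f hf).attachWith (hcompl f hf), ?_, ⟨x, hcompl f hf x hxrep⟩, ?_, ?_⟩
    · simp only [hM', Finset.mem_image]
      exact ⟨⟨f, hf⟩, Finset.mem_attach _ _, rfl⟩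
    · rw [Sym2.mem_iff] at hxe ⊢
      rcases hxe with h1 | h1
      · left; apply Subtype.ext; exact h1
      · right; apply Subtype.ext; exact h1
    · rw [Sym2.attachWith, Sym2.mem_pmap_iff]
      exact ⟨x, hxrep, rfl⟩
  · calc M'.card ≤ M.attach.card := Finset.card_image_le
      _ = M.card := Finset.card_attach
      _ = k := hMcard
end
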